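/- Small gain theorem for ergodic norms: Let s^1, …, s^m be sequences of matrices and λ ∈ (0,1). Suppose there are nonnegative constants γ_1, …, γ_m and ω_1, …, ω_m such that for all positive integers K and each i = 1, …, m, ‖s^{(i mod m)+1}‖^{λ,K} ≤ γ_i ‖s^i‖^{λ,K} + ω_i, and suppose γ_1 γ_2 ⋯ γ_m < 1. Then ‖s^1‖^λ ≤ (1/(1 − ∏_{i=1}^m γ_i)) · Σ_{i=1}^m ω_i ∏_{j=i+1}^m γ_j; in particular ‖s^1‖^λ is finite. -/

import Mathlib

open scoped BigOperators

/-- Frobenius norm of a real matrix. -/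
noncomputable def frob {n p : ℕ} (A : Matrix (Fin n) (Fin p) ℝ) : ℝ :=
  Real.sqrt (∑ i, ∑ j, (A i j) ^ 2)

/-- Truncated weighted norm `‖s‖^{λ,K} = max_{k=0,…,K} λ^{-k} ‖s_k‖_F`. -/
noncomputable def tnorm {n p : ℕ} (s : ℕ → Matrix (Fin n) (Fin p) ℝ) (l : ℝ) (K : ℕ) : ℝ :=
  (Finset.range (K + 1)).sup' Finset.nonempty_range_add_one (fun k => frob (s k) / l ^ k)

/-- the small gain theorem for ergodic norms.  The `m` sequences are
indexed by `Fin m` (so `s i` is the paper's `s^{i+1}`, and `i + 1` is the cyclic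
successor `(i mod m) + 1`). -/
theorem small_gain_theorem {n p m : ℕ} [NeZero m]
    (s : Fin m → ℕ → Matrix (Fin n) (Fin p) ℝ) (l : ℝ) (hl0 : 0 < l) (hl1 : l < 1)
    (γ ω : Fin m → ℝ) (hγ : ∀ i, 0 ≤ γ i) (hω : ∀ i, 0 ≤ ω i)
    (hrec : ∀ (K : ℕ) (i : Fin m),
      tnorm (s (i + 1)) l K ≤ γ i * tnorm (s i) l K + ω i)
    (hprod : ∏ i, γ i < 1) :
    ∀ k : ℕ, frob (s 0 k) / l ^ k ≤
      (1 / (1 - ∏ i, γ i)) *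
        ∑ i, ω i * ∏ j ∈ Finset.univ.filter (fun j => i < j), γ j := by
  intro k
  set P := ∏ i, γ i with hP
  set C := ∑ i, ω i * ∏ j ∈ Finset.univ.filter (fun j => i < j), γ j with hC
  have h1P : 0 < 1 - P := by linarith
  -- chaining the recursion
  open Fin.NatCast in
  have chain : ∀ K : ℕ, ∀ t : ℕ, t ≤ m →
      tnorm (s (t : Fin m)) l K ≤
        (∏ i ∈ Finset.univ.filter (fun i : Fin m => i.val < t), γ i) * tnorm (s 0) l K
          + ∑ i ∈ Finset.univ.filter (fun i : Fin m => i.val < t),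
              ω i * ∏ j ∈ Finset.univ.filter (fun j : Fin m => i < j ∧ j.val < t), γ j := by
    intro K t
    induction t with
    | zero => intro _; simp
    | succ t ih =>
      intro ht
      have htm : t < m := ht
      have hcast : ((t : Fin m) : ℕ) = t := Fin.val_cast_of_lt htm
      have hstep := hrec K (t : Fin m)
      have hIH := ih (le_of_lt htm)
      have hcast1 : (((t : ℕ) : Fin m) + 1) = (((t + 1 : ℕ)) : Fin m) := by push_cast; ring
      have hFins : Finset.univ.filter (fun i : Fin m => i.val < t + 1)
          = insert ((t : ℕ) : Fin m) (Finset.univ.filter (fun i : Fin m => i.val < t)) := by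
        ext i
        simp only [Finset.mem_filter, Finset.mem_insert, Finset.mem_univ, true_and,
          Fin.ext_iff, hcast]
        omega
      have hnotmem : ((t : ℕ) : Fin m) ∉ Finset.univ.filter (fun i : Fin m => i.val < t) := by
        simp [hcast]
      have hProd : (∏ i ∈ Finset.univ.filter (fun i : Fin m => i.val < t + 1), γ i)
          = γ ((t : ℕ) : Fin m) * ∏ i ∈ Finset.univ.filter (fun i : Fin m => i.val < t), γ i := by
        rw [hFins, Finset.prod_insert hnotmem]
      have hEmpty : Finset.univ.filter
          (fun j : Fin m => ((t : ℕ) : Fin m) < j ∧ j.val < t + 1) = ∅ := by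
        ext j
        simp only [Finset.mem_filter, Finset.mem_univ, true_and, Finset.notMem_empty,
          iff_false, Fin.lt_def, hcast]
        omega
      have hInner : ∀ i ∈ Finset.univ.filter (fun i : Fin m => i.val < t),
          (∏ j ∈ Finset.univ.filter (fun j : Fin m => i < j ∧ j.val < t + 1), γ j)
            = γ ((t : ℕ) : Fin m) *
              ∏ j ∈ Finset.univ.filter (fun j : Fin m => i < j ∧ j.val < t), γ j := by
        intro i hi
        simp only [Finset.mem_filter, Finset.mem_univ, true_and] at hi
        have h1 : Finset.univ.filter (fun j : Fin m => i < j ∧ j.val < t + 1)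
            = insert ((t : ℕ) : Fin m)
                (Finset.univ.filter (fun j : Fin m => i < j ∧ j.val < t)) := by
          ext j
          simp only [Finset.mem_filter, Finset.mem_insert, Finset.mem_univ, true_and,
            Fin.ext_iff, Fin.lt_def, hcast]
          omega
        have h2 : ((t : ℕ) : Fin m) ∉
            Finset.univ.filter (fun j : Fin m => i < j ∧ j.val < t) := by
          simp [hcast]
        rw [h1, Finset.prod_insert h2]
      have hSum : (∑ i ∈ Finset.univ.filter (fun i : Fin m => i.val < t + 1),
            ω i * ∏ j ∈ Finset.univ.filter (fun j : Fin m => i < j ∧ j.val < t + 1), γ j)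
          = γ ((t : ℕ) : Fin m) *
              (∑ i ∈ Finset.univ.filter (fun i : Fin m => i.val < t),
                ω i * ∏ j ∈ Finset.univ.filter (fun j : Fin m => i < j ∧ j.val < t), γ j)
            + ω ((t : ℕ) : Fin m) := by
        rw [hFins, Finset.sum_insert hnotmem, hEmpty, Finset.mul_sum]
        simp only [Finset.prod_empty, mul_one]
        rw [add_comm]
        congr 1
        apply Finset.sum_congr rfl
        intro i hi
        rw [hInner i hi]; ring
      rw [← hcast1]
      calc tnorm (s ((t : ℕ) + 1 : Fin m)) l K
            ≤ γ ((t : ℕ) : Fin m) * tnorm (s ((t : ℕ) : Fin m)) l K + ω ((t : ℕ) : Fin m) := by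
              exact_mod_cast hstep
        _ ≤ γ ((t : ℕ) : Fin m) *
              ((∏ i ∈ Finset.univ.filter (fun i : Fin m => i.val < t), γ i) * tnorm (s 0) l K
                + ∑ i ∈ Finset.univ.filter (fun i : Fin m => i.val < t),
                    ω i * ∏ j ∈ Finset.univ.filter (fun j : Fin m => i < j ∧ j.val < t), γ j)
              + ω ((t : ℕ) : Fin m) := by
              have := mul_le_mul_of_nonneg_left hIH (hγ ((t : ℕ) : Fin m))
              linarith
        _ ≤ _ := by
              rw [hProd, hSum]
              ring_nf
              linarith
  -- specialize at t = m
  open Fin.NatCast in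
  have hmain : ∀ K : ℕ, tnorm (s 0) l K ≤ P * tnorm (s 0) l K + C := by
    intro K
    have h := chain K m le_rfl
    have h0 : ((m : ℕ) : Fin m) = 0 := Fin.natCast_self m
    have hF : Finset.univ.filter (fun i : Fin m => i.val < m) = Finset.univ := by
      apply Finset.filter_true_of_mem; intro i _; exact i.is_lt
    have hFj : ∀ i : Fin m, Finset.univ.filter (fun j : Fin m => i < j ∧ j.val < m)
        = Finset.univ.filter (fun j : Fin m => i < j) := by
      intro i; apply Finset.filter_congr; intro j _; simp [j.is_lt]
    rw [h0, hF] at h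
    calc tnorm (s 0) l K ≤ _ := h
      _ = P * tnorm (s 0) l K + C := by
          rw [hP, hC]
          congr 1
          apply Finset.sum_congr rfl
          intro i _
          rw [hFj i]
  have hT : tnorm (s 0) l k ≤ C / (1 - P) := by
    have := hmain k
    rw [le_div_iff₀ h1P]
    nlinarith [hmain k]
  have hfrob : frob (s 0 k) / l ^ k ≤ tnorm (s 0) l k := by
    apply Finset.le_sup' (fun j => frob (s 0 j) / l ^ j)
    simp
  calc frob (s 0 k) / l ^ k ≤ C / (1 - P) := le_trans hfrob hT
    _ = (1 / (1 - P)) * C := by rw [one_div_mul_eq_div]
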